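/- Let Λ be a finite index set containing a distinguished element 0, let d_λ ≥ 1 be integers with d_0 = 1 and d_λ ≥ 2 for λ ≠ 0, and let (p_λ)_{λ∈Λ} be a probability distribution. Then 1 − ∑_{λ∈Λ} p_λ²/d_λ ≥ (1/2)(1 − p_0)². -/
import Mathlib


theorem stmt_16 {ι : Type*} [Fintype ι] [DecidableEq ι] (o : ι)
    (d : ι → ℕ) (hd0 : d o = 1) (hd : ∀ lam, lam ≠ o → 2 ≤ d lam)
    (p : ι → ℝ) (hp : ∀ lam, 0 ≤ p lam) (hsum : ∑ lam, p lam = 1) :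
    1 - ∑ lam, p lam ^ 2 / d lam ≥ (1 / 2) * (1 - p o) ^ 2 := by
  classical
  set s := ∑ lam ∈ Finset.univ.erase o, p lam with hs
  have hsplit : ∑ lam, p lam = p o + s := by
    rw [hs, ← Finset.add_sum_erase _ p (Finset.mem_univ o)]
  have hs0 : 0 ≤ s := Finset.sum_nonneg fun i _ => hp i
  have hpos : p o = 1 - s := by rw [hsplit] at hsum; linarith
  have hsum2 : ∑ lam, p lam ^ 2 / d lam
      = p o ^ 2 + ∑ lam ∈ Finset.univ.erase o, p lam ^ 2 / d lam := by
    rw [← Finset.add_sum_erase _ (fun lam => p lam ^ 2 / d lam) (Finset.mem_univ o), hd0]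
    norm_num
  have h1 : ∑ lam ∈ Finset.univ.erase o, p lam ^ 2 / d lam
      ≤ ∑ lam ∈ Finset.univ.erase o, p lam ^ 2 / 2 := by
    apply Finset.sum_le_sum
    intro lam hlam
    have h2 : (2:ℝ) ≤ d lam := by exact_mod_cast hd lam (Finset.ne_of_mem_erase hlam)
    gcongr
  have h3 : ∑ lam ∈ Finset.univ.erase o, p lam ^ 2 / 2 ≤ s * s / 2 := by
    have : ∑ lam ∈ Finset.univ.erase o, p lam ^ 2 ≤ s * s := by
      calc ∑ lam ∈ Finset.univ.erase o, p lam ^ 2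
          ≤ ∑ lam ∈ Finset.univ.erase o, p lam * s := by
            apply Finset.sum_le_sum
            intro lam hlam
            have hle : p lam ≤ s := Finset.single_le_sum (fun i _ => hp i) hlam
            have := hp lam
            nlinarith
        _ = s * s := by rw [← Finset.sum_mul]
    rw [← Finset.sum_div]
    linarith
  nlinarith [sq_nonneg s, hs0, hp o]
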